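/- Fix an integer m with 2 ≤ m ≤ 8, let p ∈ (0,1) be the unique root of (1-x)^4 = (m-1)^4 x^3, and set ρ = (1/2)·log₂(1/p). Let S = Fin m, let Q = Bool × Fin m with elements written (q_d, q_s), and define: the Ising channel law P(y|x,s) = 1 if x = s = y, P(y|x,s) = 1/2 if x ≠ s and y ∈ {x,s}, and P(y|x,s) = 0 otherwise; the Q-graph transition φ((q_d,q_s), y) = (0, y) if q_d = 1 and y = q_s, and φ((q_d,q_s), y) = (1, y) otherwise; the test distribution T(y|(1,q_s)) = (1+p)/2 if y = q_s and (1-p)/(2(m-1)) otherwise, and T(y|(0,q_s)) = 2p/(1+p) if y = q_s and (1-p)/((1+p)(m-1)) otherwise; and the value function V(s,(1,q_s)) = ρ if q_s = s, V(s,(1,q_s)) = 1 + 1.5ρ if q_s ≠ s, V(s,(0,q_s)) = 2ρ - 1 + log₂(1+p) if q_s = s, and V(s,(0,q_s)) = 1.5ρ + log₂(1+p) if q_s ≠ s. Then for every s ∈ S and q ∈ Q the Bellman equation holds: ρ + V(s,q) = max over x ∈ S of [ Σ_y P(y|x,s)·log₂(P(y|x,s)/T(y|q)) + Σ_y P(y|x,s)·V(x,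 φ(q,y)) ], where all sums range over y ∈ Fin m with the convention 0·log₂(0/t) = 0. -/
import Mathlib

/-- The Ising channel law `P(y|x,s)`: equal to `1` if `x = s = y`, to `1/2` if
`x ≠ s` and `y ∈ {x, s}`, and to `0` otherwise. -/
noncomputable def IsingP {m : ℕ} (y x s : Fin m) : ℝ :=
  if x = s then (if y = s then 1 else 0)
  else if y = x ∨ y = s then 1 / 2 else 0

/-- The Q-graph transition: `φ((q_d, q_s), y) = (0, y)` if `q_d = 1` and `y = q_s`,
and `φ((q_d, q_s), y) = (1, y)` otherwise (here `q_d = 1` is `q_d = true`). -/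
def qGraph {m : ℕ} (q : Bool × Fin m) (y : Fin m) : Bool × Fin m :=
  if q.1 = true ∧ y = q.2 then (false, y) else (true, y)

/-- The test distribution `T(y|q)` of the Q-graph for `|X| ≤ 8`:
`T(y|(1,q_s)) = (1+p)/2` if `y = q_s` and `(1-p)/(2(m-1))` otherwise;
`T(y|(0,q_s)) = 2p/(1+p)` if `y = q_s` and `(1-p)/((1+p)(m-1))` otherwise. -/
noncomputable def testT (p : ℝ) {m : ℕ} (y : Fin m) (q : Bool × Fin m) : ℝ :=
  if q.1 then (if y = q.2 then (1 + p) / 2 else (1 - p) / (2 * ((m : ℝ) - 1)))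
  else (if y = q.2 then 2 * p / (1 + p) else (1 - p) / ((1 + p) * ((m : ℝ) - 1)))

/-- The value function of Lemma 1: `V(s,(1,q_s)) = ρ` if `q_s = s`, `1 + 1.5ρ` if
`q_s ≠ s`; `V(s,(0,q_s)) = 2ρ - 1 + log₂(1+p)` if `q_s = s`, `1.5ρ + log₂(1+p)`
if `q_s ≠ s`. -/
noncomputable def valueV (ρ p : ℝ) {m : ℕ} (s : Fin m) (q : Bool × Fin m) : ℝ :=
  if q.1 then (if q.2 = s then ρ else 1 + 1.5 * ρ)
  else (if q.2 = s then 2 * ρ - 1 + Real.logb 2 (1 + p)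
        else 1.5 * ρ + Real.logb 2 (1 + p))

lemma sum_delta {m : ℕ} (s : Fin m) (g : Fin m → ℝ) :
    (∑ y : Fin m, (if y = s then (1:ℝ) else 0) * g y) = g s := by
  simp only [ite_mul, one_mul, zero_mul]
  simp [Finset.sum_ite_eq' Finset.univ s g]

lemma sum_pair {m : ℕ} (x s : Fin m) (h : x ≠ s) (g : Fin m → ℝ) :
    (∑ y : Fin m, (if y = x ∨ y = s then (1:ℝ)/2 else 0) * g y)
      = 1/2 * g x + 1/2 * g s := by
  have h1 : ∀ y : Fin m, (if y = x ∨ y = s then (1:ℝ)/2 else 0) * g y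
      = (if y = x then (1:ℝ) else 0) * (1/2 * g y)
        + (if y = s then (1:ℝ) else 0) * (1/2 * g y) := by
    intro y
    by_cases h2 : y = x <;> by_cases h3 : y = s <;> simp_all
  rw [Finset.sum_congr rfl fun y _ => h1 y, Finset.sum_add_distrib, sum_delta, sum_delta]

lemma sum_IsingP_eq {m : ℕ} (s : Fin m) (g : Fin m → ℝ) :
    (∑ y : Fin m, IsingP y s s * g y) = g s := by
  have h1 : ∀ y : Fin m, IsingP y s s * g y = (if y = s then (1:ℝ) else 0) * g y := by
    intro y; simp [IsingP]
  rw [Finset.sum_congr rfl fun y _ => h1 y, sum_delta]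

lemma sum_IsingP_ne {m : ℕ} {x s : Fin m} (h : x ≠ s) (g : Fin m → ℝ) :
    (∑ y : Fin m, IsingP y x s * g y) = 1/2 * g x + 1/2 * g s := by
  have h1 : ∀ y : Fin m, IsingP y x s * g y
      = (if y = x ∨ y = s then (1:ℝ)/2 else 0) * g y := by
    intro y; simp [IsingP, h]
  rw [Finset.sum_congr rfl fun y _ => h1 y, sum_pair x s h]

lemma IsingP_ss {m : ℕ} (s : Fin m) : IsingP s s s = 1 := by simp [IsingP]
lemma IsingP_xx {m : ℕ} {x s : Fin m} (h : x ≠ s) : IsingP x x s = 1/2 := by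
  simp [IsingP, h]
lemma IsingP_sx {m : ℕ} {x s : Fin m} (h : x ≠ s) : IsingP s x s = 1/2 := by
  simp [IsingP, h]

lemma testT_t_eq (p : ℝ) {m : ℕ} (qs : Fin m) :
    testT p qs (true, qs) = (1 + p) / 2 := by simp [testT]
lemma testT_t_ne (p : ℝ) {m : ℕ} {y qs : Fin m} (h : y ≠ qs) :
    testT p y (true, qs) = (1 - p) / (2 * ((m : ℝ) - 1)) := by simp [testT, h]
lemma testT_f_eq (p : ℝ) {m : ℕ} (qs : Fin m) :
    testT p qs (false, qs) = 2 * p / (1 + p) := by simp [testT]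
lemma testT_f_ne (p : ℝ) {m : ℕ} {y qs : Fin m} (h : y ≠ qs) :
    testT p y (false, qs) = (1 - p) / ((1 + p) * ((m : ℝ) - 1)) := by simp [testT, h]

lemma qGraph_t_eq {m : ℕ} (qs : Fin m) : qGraph (true, qs) qs = (false, qs) := by
  simp [qGraph]
lemma qGraph_t_ne {m : ℕ} {y qs : Fin m} (h : y ≠ qs) :
    qGraph (true, qs) y = (true, y) := by simp [qGraph, h]
lemma qGraph_f {m : ℕ} (qs y : Fin m) : qGraph (false, qs) y = (true, y) := by
  simp [qGraph]

lemma valueV_t_eq (ρ p : ℝ) {m : ℕ} (s : Fin m) : valueV ρ p s (true, s) = ρ := by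
  simp [valueV]
lemma valueV_t_ne (ρ p : ℝ) {m : ℕ} {qs s : Fin m} (h : qs ≠ s) :
    valueV ρ p s (true, qs) = 1 + 1.5 * ρ := by simp [valueV, h]
lemma valueV_f_eq (ρ p : ℝ) {m : ℕ} (s : Fin m) :
    valueV ρ p s (false, s) = 2 * ρ - 1 + Real.logb 2 (1 + p) := by simp [valueV]
lemma valueV_f_ne (ρ p : ℝ) {m : ℕ} {qs s : Fin m} (h : qs ≠ s) :
    valueV ρ p s (false, qs) = 1.5 * ρ + Real.logb 2 (1 + p) := by simp [valueV, h]

set_option maxHeartbeats 1000000 in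
/-- Lemma 1 of the paper: for `2 ≤ m ≤ 8`, `p ∈ (0,1)` the unique root
of `(1-x)^4 = (m-1)^4 x^3`, and `ρ = (1/2)log₂(1/p)`, the Bellman equation
`ρ + V(s,q) = max_x [ Σ_y P(y|x,s)log₂(P(y|x,s)/T(y|q)) + Σ_y P(y|x,s)V(x,φ(q,y)) ]`
holds for every `s` and `q` (with the convention `0·log₂(0/t) = 0`, automatic since
`Real.log 0 = 0`). The "max" is expressed via `IsGreatest` over the range of the
bracketed expression. -/
theorem ising_bellman_le_eight (m : ℕ) (hm2 : 2 ≤ m) (hm8 : m ≤ 8) (p : ℝ)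
    (hp : p ∈ Set.Ioo (0 : ℝ) 1)
    (hroot : (1 - p) ^ 4 = ((m : ℝ) - 1) ^ 4 * p ^ 3)
    (huniq : ∀ q ∈ Set.Ioo (0 : ℝ) 1,
      (1 - q) ^ 4 = ((m : ℝ) - 1) ^ 4 * q ^ 3 → q = p) :
    ∀ (s : Fin m) (q : Bool × Fin m),
      IsGreatest
        (Set.range fun x : Fin m =>
          (∑ y : Fin m, IsingP y x s * Real.logb 2 (IsingP y x s / testT p y q)) +
          ∑ y : Fin m, IsingP y x s * valueV (1 / 2 * Real.logb 2 (1 / p)) p x (qGraph q y))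
        (1 / 2 * Real.logb 2 (1 / p) + valueV (1 / 2 * Real.logb 2 (1 / p)) p s q) := by
  obtain ⟨hp0, hp1⟩ := hp
  have hm2' : (2:ℝ) ≤ (m:ℝ) := by exact_mod_cast hm2
  have hm8' : ((m:ℝ)) ≤ 8 := by exact_mod_cast hm8
  have hc0 : (0:ℝ) < (m:ℝ) - 1 := by linarith
  have h1p : (0:ℝ) < 1 - p := by linarith
  have h2p : (0:ℝ) < 1 + p := by linarith
  have hcc : (0:ℝ) < 2 * ((m:ℝ) - 1) := by linarith
  have hdd : (0:ℝ) < (1 + p) * ((m:ℝ) - 1) := by nlinarith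
  have lgb : Real.logb 2 2 = 1 := Real.logb_self_eq_one (by norm_num)
  set R := 1 / 2 * Real.logb 2 (1 / p) with hRdef
  have hR : R = -(1/2) * Real.logb 2 p := by
    rw [hRdef, Real.logb_div one_ne_zero (ne_of_gt hp0), Real.logb_one]; ring
  clear_value R
  have hkey : 4 * Real.logb 2 (1 - p)
      = 4 * Real.logb 2 ((m:ℝ) - 1) + 3 * Real.logb 2 p := by
    have h := congrArg (Real.logb 2) hroot
    rw [Real.logb_mul (pow_ne_zero 4 (ne_of_gt hc0)) (pow_ne_zero 3 (ne_of_gt hp0)),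
      Real.logb_pow, Real.logb_pow, Real.logb_pow] at h
    push_cast at h
    linarith
  have hp16 : (1:ℝ)/16 ≤ p := by
    by_contra hcon
    push_neg at hcon
    have e0 : ((m:ℝ) - 1)^2 ≤ 49 := by nlinarith
    have e1 : ((m:ℝ) - 1)^4 ≤ 2401 := by
      nlinarith [mul_le_mul e0 e0 (sq_nonneg ((m:ℝ) - 1)) (by norm_num : (0:ℝ) ≤ 49)]
    have e2 : p^3 < (1/16:ℝ)^3 := pow_lt_pow_left₀ hcon hp0.le (by norm_num)
    have e3 : ((m:ℝ) - 1)^4 * p^3 < 2401 * (1/16:ℝ)^3 := by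
      nlinarith [pow_pos hp0 3, pow_pos hc0 4]
    have e4 : (15/16:ℝ)^4 < (1 - p)^4 :=
      pow_lt_pow_left₀ (by linarith) (by norm_num) (by norm_num)
    nlinarith [hroot]
  have hlp4 : (-4:ℝ) ≤ Real.logb 2 p := by
    have h1 : Real.logb 2 ((1:ℝ)/16) ≤ Real.logb 2 p :=
      Real.logb_le_logb_of_le (by norm_num) (by norm_num) hp16
    have h2 : Real.logb 2 ((1:ℝ)/16) = -4 := by
      rw [one_div, Real.logb_inv, show (16:ℝ) = 2^(4:ℕ) by norm_num, Real.logb_pow, lgb]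
      norm_num
    linarith
  -- the eight logarithm values
  have hA1 : Real.logb 2 (1 / ((1 + p) / 2)) = 1 - Real.logb 2 (1 + p) := by
    rw [Real.logb_div one_ne_zero (ne_of_gt (by positivity)),
      Real.logb_div (ne_of_gt h2p) (by norm_num), Real.logb_one, lgb]; ring
  have hA2 : Real.logb 2 (1 / 2 / ((1 + p) / 2)) = -Real.logb 2 (1 + p) := by
    rw [Real.logb_div (by norm_num) (ne_of_gt (by positivity)),
      Real.logb_div one_ne_zero (by norm_num),
      Real.logb_div (ne_of_gt h2p) (by norm_num), Real.logb_one, lgb]; ring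
  have hB1 : Real.logb 2 (1 / ((1 - p) / (2 * ((m:ℝ) - 1))))
      = 1 + Real.logb 2 ((m:ℝ) - 1) - Real.logb 2 (1 - p) := by
    rw [Real.logb_div one_ne_zero (ne_of_gt (div_pos h1p hcc)),
      Real.logb_div (ne_of_gt h1p) (ne_of_gt hcc),
      Real.logb_mul (by norm_num) (ne_of_gt hc0), Real.logb_one, lgb]; ring
  have hB2 : Real.logb 2 (1 / 2 / ((1 - p) / (2 * ((m:ℝ) - 1))))
      = Real.logb 2 ((m:ℝ) - 1) - Real.logb 2 (1 - p) := by
    rw [Real.logb_div (by norm_num) (ne_of_gt (div_pos h1p hcc)),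
      Real.logb_div one_ne_zero (by norm_num),
      Real.logb_div (ne_of_gt h1p) (ne_of_gt hcc),
      Real.logb_mul (by norm_num) (ne_of_gt hc0), Real.logb_one, lgb]; ring
  have hC1 : Real.logb 2 (1 / (2 * p / (1 + p)))
      = Real.logb 2 (1 + p) - 1 - Real.logb 2 p := by
    rw [Real.logb_div one_ne_zero (ne_of_gt (by positivity)),
      Real.logb_div (ne_of_gt (by positivity)) (ne_of_gt h2p),
      Real.logb_mul (by norm_num) (ne_of_gt hp0), Real.logb_one, lgb]; ring
  have hC2 : Real.logb 2 (1 / 2 / (2 * p / (1 + p)))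
      = Real.logb 2 (1 + p) - 2 - Real.logb 2 p := by
    rw [Real.logb_div (by norm_num) (ne_of_gt (by positivity)),
      Real.logb_div one_ne_zero (by norm_num),
      Real.logb_div (ne_of_gt (by positivity)) (ne_of_gt h2p),
      Real.logb_mul (by norm_num) (ne_of_gt hp0), Real.logb_one, lgb]; ring
  have hD1 : Real.logb 2 (1 / ((1 - p) / ((1 + p) * ((m:ℝ) - 1))))
      = Real.logb 2 (1 + p) + Real.logb 2 ((m:ℝ) - 1) - Real.logb 2 (1 - p) := by
    rw [Real.logb_div one_ne_zero (ne_of_gt (div_pos h1p hdd)),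
      Real.logb_div (ne_of_gt h1p) (ne_of_gt hdd),
      Real.logb_mul (ne_of_gt h2p) (ne_of_gt hc0), Real.logb_one]; ring
  have hD2 : Real.logb 2 (1 / 2 / ((1 - p) / ((1 + p) * ((m:ℝ) - 1))))
      = Real.logb 2 (1 + p) - 1 + Real.logb 2 ((m:ℝ) - 1) - Real.logb 2 (1 - p) := by
    rw [Real.logb_div (by norm_num) (ne_of_gt (div_pos h1p hdd)),
      Real.logb_div one_ne_zero (by norm_num),
      Real.logb_div (ne_of_gt h1p) (ne_of_gt hdd),
      Real.logb_mul (ne_of_gt h2p) (ne_of_gt hc0), Real.logb_one, lgb]; ring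
  intro s q
  obtain ⟨qd, qs⟩ := q
  cases qd with
  | true =>
    by_cases hqs : qs = s
    · subst hqs
      have hstar : (∑ y : Fin m, IsingP y qs qs *
            Real.logb 2 (IsingP y qs qs / testT p y (true, qs))) +
          ∑ y : Fin m, IsingP y qs qs * valueV R p qs (qGraph (true, qs) y)
          = R + valueV R p qs (true, qs) := by
        rw [sum_IsingP_eq, sum_IsingP_eq, IsingP_ss, testT_t_eq, qGraph_t_eq,
          valueV_f_eq, valueV_t_eq, hA1]
        linarith
      constructor
      · exact ⟨qs, hstar⟩
      · rintro z ⟨x, rfl⟩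
        by_cases hxs : x = qs
        · subst hxs; exact le_of_eq hstar
        · simp only []
          rw [sum_IsingP_ne hxs, sum_IsingP_ne hxs, IsingP_xx hxs, IsingP_sx hxs,
            testT_t_ne p hxs, testT_t_eq, qGraph_t_ne hxs, qGraph_t_eq,
            valueV_t_eq, valueV_f_ne R p (Ne.symm hxs), valueV_t_eq, hB2, hA2]
          linarith
    · have hstar : (∑ y : Fin m, IsingP y s s *
            Real.logb 2 (IsingP y s s / testT p y (true, qs))) +
          ∑ y : Fin m, IsingP y s s * valueV R p s (qGraph (true, qs) y)
          = R + valueV R p s (true, qs) := by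
        rw [sum_IsingP_eq, sum_IsingP_eq, IsingP_ss, testT_t_ne p (Ne.symm hqs),
          qGraph_t_ne (Ne.symm hqs), valueV_t_eq, valueV_t_ne R p hqs, hB1]
        linarith
      constructor
      · exact ⟨s, hstar⟩
      · rintro z ⟨x, rfl⟩
        by_cases hxs : x = s
        · subst hxs; exact le_of_eq hstar
        · by_cases hxq : x = qs
          · subst hxq
            simp only []
            rw [sum_IsingP_ne hxs, sum_IsingP_ne hxs, IsingP_xx hxs, IsingP_sx hxs,
              testT_t_eq, testT_t_ne p (Ne.symm hqs), qGraph_t_eq,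
              qGraph_t_ne (Ne.symm hqs), valueV_f_eq, valueV_t_ne R p (Ne.symm hxs),
              valueV_t_ne R p hqs, hA2, hB2]
            linarith
          · simp only []
            rw [sum_IsingP_ne hxs, sum_IsingP_ne hxs, IsingP_xx hxs, IsingP_sx hxs,
              testT_t_ne p hxq, testT_t_ne p (Ne.symm hqs), qGraph_t_ne hxq,
              qGraph_t_ne (Ne.symm hqs), valueV_t_eq, valueV_t_ne R p (Ne.symm hxs),
              valueV_t_ne R p hqs, hB2]
            linarith
  | false =>
    by_cases hqs : qs = s
    · subst hqs
      have hstar : (∑ y : Fin m, IsingP y qs qs *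
            Real.logb 2 (IsingP y qs qs / testT p y (false, qs))) +
          ∑ y : Fin m, IsingP y qs qs * valueV R p qs (qGraph (false, qs) y)
          = R + valueV R p qs (false, qs) := by
        rw [sum_IsingP_eq, sum_IsingP_eq, IsingP_ss, testT_f_eq, qGraph_f,
          valueV_t_eq, valueV_f_eq, hC1]
        linarith
      constructor
      · exact ⟨qs, hstar⟩
      · rintro z ⟨x, rfl⟩
        by_cases hxs : x = qs
        · subst hxs; exact le_of_eq hstar
        · simp only []
          rw [sum_IsingP_ne hxs, sum_IsingP_ne hxs, IsingP_xx hxs, IsingP_sx hxs,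
            testT_f_ne p hxs, testT_f_eq, qGraph_f, qGraph_f,
            valueV_t_eq, valueV_t_ne R p (Ne.symm hxs), valueV_f_eq, hD2, hC2]
          linarith
    · have hstar : (∑ y : Fin m, IsingP y s s *
            Real.logb 2 (IsingP y s s / testT p y (false, qs))) +
          ∑ y : Fin m, IsingP y s s * valueV R p s (qGraph (false, qs) y)
          = R + valueV R p s (false, qs) := by
        rw [sum_IsingP_eq, sum_IsingP_eq, IsingP_ss, testT_f_ne p (Ne.symm hqs),
          qGraph_f, valueV_t_eq, valueV_f_ne R p hqs, hD1]
        linarith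
      constructor
      · exact ⟨s, hstar⟩
      · rintro z ⟨x, rfl⟩
        by_cases hxs : x = s
        · subst hxs; exact le_of_eq hstar
        · by_cases hxq : x = qs
          · subst hxq
            simp only []
            rw [sum_IsingP_ne hxs, sum_IsingP_ne hxs, IsingP_xx hxs, IsingP_sx hxs,
              testT_f_eq, testT_f_ne p (Ne.symm hqs), qGraph_f, qGraph_f,
              valueV_t_eq, valueV_t_ne R p (Ne.symm hxs),
              valueV_f_ne R p hqs, hC2, hD2]
            linarith
          · simp only []
            rw [sum_IsingP_ne hxs, sum_IsingP_ne hxs, IsingP_xx hxs, IsingP_sx hxs,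
              testT_f_ne p hxq, testT_f_ne p (Ne.symm hqs), qGraph_f, qGraph_f,
              valueV_t_eq, valueV_t_ne R p (Ne.symm hxs),
              valueV_f_ne R p hqs, hD2]
            linarith
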